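/- Let A be an abelian length category, X, Y indecomposable, and X ⊂ Y a Gabriel-Roiter inclusion (i.e., μ(X) = max{μ(Y') : Y' ⊂ Y proper indecomposable subobject}). If X ⊆ U ⊂ Y with U a proper subobject of Y, then X is a direct summand of U. -/

import Mathlib

open CategoryTheory CategoryTheory.Limits

/-- The lexicographic order on finite subsets of ℕ:
`X ≤ Y` iff `min (Y \ X) ≤ min (X \ Y)`, with `min ∅ = ⊤`. -/
def lexLE (X Y : Finset ℕ) : Prop :=
  (Y \ X).min ≤ (X \ Y).min

/-- Strict lexicographic order. -/
def lexLT (X Y : Finset ℕ) : Prop :=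
  lexLE X Y ∧ ¬ lexLE Y X

variable {C : Type*} [Category C] [Abelian C]

/-- `n` is the composition length of the object `X`: there is a maximal
strictly increasing chain of subobjects of `X` from `⊥` to `⊤` with `n`
steps, and every strictly increasing chain of subobjects has at most
`n` steps. -/
def ObjLength (X : C) (n : ℕ) : Prop :=
  (∃ f : Fin (n + 1) → Subobject X, StrictMono f ∧ f 0 = ⊥ ∧ f (Fin.last n) = ⊤) ∧
  ∀ (m : ℕ) (f : Fin (m + 1) → Subobject X), StrictMono f → m ≤ n

/-- `A` is the set of lengths of a finite chain of indecomposable subobjects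
of `X` ending in `X` itself. -/
def IsGRChainVal (len : C → ℕ) (X : C) (A : Finset ℕ) : Prop :=
  ∃ s : Finset (Subobject X),
    IsChain (· ≤ ·) (s : Set (Subobject X)) ∧
    (⊤ : Subobject X) ∈ s ∧
    (∀ t ∈ s, Indecomposable ((t : Subobject X) : C)) ∧
    s.image (fun t : Subobject X => len ((t : Subobject X) : C)) = A

/-- `mu` is the Gabriel-Roiter measure associated to the length function
`len`: for each indecomposable `X`, `mu X` is the lexicographic maximum of
the sets of lengths along chains of indecomposable subobjects of `X`. -/
def IsGRMeasure (len : C → ℕ) (mu : C → Finset ℕ) : Prop :=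
  ∀ X : C, Indecomposable X →
    IsGRChainVal len X (mu X) ∧
    ∀ A : Finset ℕ, IsGRChainVal len X A → lexLE A (mu X)

/-- `X` is a Gabriel-Roiter predecessor of `Y`: both are indecomposable,
`X` is a proper subobject of `Y`, and `mu X` attains the maximum of the
Gabriel-Roiter measures of the proper indecomposable subobjects of `Y`. -/
def IsGRPred (mu : C → Finset ℕ) (X Y : C) : Prop :=
  Indecomposable X ∧ Indecomposable Y ∧
  (∃ f : X ⟶ Y, Mono f ∧ ¬ IsIso f) ∧
  ∀ t : Subobject Y, t ≠ ⊤ → Indecomposable ((t : Subobject Y) : C) →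
    lexLE (mu ((t : Subobject Y) : C)) (mu X)


set_option linter.unusedSectionVars false
set_option linter.unusedVariables false
set_option maxHeartbeats 1000000

namespace GR

theorem lexLE_refl (A : Finset ℕ) : lexLE A A := le_refl _

theorem lexLE_of_subset {A B : Finset ℕ} (h : A ⊆ B) : lexLE A B := by
  unfold lexLE
  rw [Finset.sdiff_eq_empty_iff_subset.2 h]
  exact le_top

theorem eq_of_lexLE_of_subset {A B : Finset ℕ} (h : lexLE A B) (h2 : B ⊆ A) : A = B := by
  unfold lexLE at h
  rw [Finset.sdiff_eq_empty_iff_subset.2 h2] at h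
  simp only [Finset.min_empty, top_le_iff, Finset.min_eq_top] at h
  exact Finset.Subset.antisymm (Finset.sdiff_eq_empty_iff_subset.1 h) h2

theorem getwit {s : Finset ℕ} {x : ℕ} (h : s.min ≤ (x : ℕ∞)) : ∃ n ∈ s, n ≤ x := by
  by_cases hs : s = ∅
  · rw [hs] at h
    simp only [Finset.min_empty] at h
    exact absurd (top_le_iff.1 h) (WithTop.coe_ne_top)
  · obtain ⟨a, ha⟩ := Finset.min_of_nonempty (Finset.nonempty_iff_ne_empty.2 hs)
    refine ⟨a, Finset.mem_of_min ha, ?_⟩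
    rw [ha] at h
    exact WithTop.coe_le_coe.1 h

theorem lexLE_antisymm {A B : Finset ℕ} (h1 : lexLE A B) (h2 : lexLE B A) : A = B := by
  unfold lexLE at h1 h2
  have h3 : (B \ A).min = (A \ B).min := le_antisymm h1 h2
  by_cases he : (A \ B) = ∅
  · have hA : A ⊆ B := Finset.sdiff_eq_empty_iff_subset.1 he
    rw [he] at h3
    simp only [Finset.min_empty, Finset.min_eq_top] at h3
    exact Finset.Subset.antisymm hA (Finset.sdiff_eq_empty_iff_subset.1 h3)
  · obtain ⟨a, ha⟩ := Finset.min_of_nonempty (Finset.nonempty_iff_ne_empty.2 he)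
    have haA : a ∈ A \ B := Finset.mem_of_min ha
    have haB : a ∈ B \ A := Finset.mem_of_min (h3.trans ha)
    exact absurd (Finset.mem_sdiff.1 haB).1 (Finset.mem_sdiff.1 haA).2

theorem min_le_of_lex {A B : Finset ℕ} (h : lexLE A B) {x : ℕ} (hx : x ∈ A \ B) :
    (B \ A).min ≤ (x : ℕ∞) :=
  le_trans h (Finset.min_le hx)

theorem lexLE_trans {A B C : Finset ℕ} (h1 : lexLE A B) (h2 : lexLE B C) : lexLE A C := by
  have key : ∀ m : ℕ, m ∈ B \ C → (C \ A).min ≤ (m : ℕ∞) := by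
    intro m
    induction m using Nat.strong_induction_on with
    | _ m IH =>
      intro hm
      obtain ⟨n, hn, hnm⟩ := getwit (min_le_of_lex h2 hm)
      have hnC : n ∈ C := (Finset.mem_sdiff.1 hn).1
      have hnB : n ∉ B := (Finset.mem_sdiff.1 hn).2
      by_cases hnA : n ∈ A
      · obtain ⟨p, hp, hpn⟩ := getwit (min_le_of_lex h1 (Finset.mem_sdiff.2 ⟨hnA, hnB⟩))
        have hpB : p ∈ B := (Finset.mem_sdiff.1 hp).1
        have hpA : p ∉ A := (Finset.mem_sdiff.1 hp).2
        by_cases hpC : p ∈ C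
        · exact le_trans (Finset.min_le (Finset.mem_sdiff.2 ⟨hpC, hpA⟩))
            (WithTop.coe_le_coe.2 (le_trans hpn hnm))
        · have hpltn : p ≠ n := fun h => hnB (h ▸ hpB)
          have hplt : p < m := by omega
          exact le_trans (IH p hplt (Finset.mem_sdiff.2 ⟨hpB, hpC⟩))
            (WithTop.coe_le_coe.2 (le_of_lt hplt))
      · exact le_trans (Finset.min_le (Finset.mem_sdiff.2 ⟨hnC, hnA⟩)) (WithTop.coe_le_coe.2 hnm)
  unfold lexLE
  apply Finset.le_min
  intro m hm
  have hmA : m ∈ A := (Finset.mem_sdiff.1 hm).1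
  have hmC : m ∉ C := (Finset.mem_sdiff.1 hm).2
  by_cases hmB : m ∈ B
  · exact key m (Finset.mem_sdiff.2 ⟨hmB, hmC⟩)
  · obtain ⟨p, hp, hpm⟩ := getwit (min_le_of_lex h1 (Finset.mem_sdiff.2 ⟨hmA, hmB⟩))
    have hpB : p ∈ B := (Finset.mem_sdiff.1 hp).1
    have hpA : p ∉ A := (Finset.mem_sdiff.1 hp).2
    by_cases hpC : p ∈ C
    · exact le_trans (Finset.min_le (Finset.mem_sdiff.2 ⟨hpC, hpA⟩)) (WithTop.coe_le_coe.2 hpm)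
    · exact le_trans (key p (Finset.mem_sdiff.2 ⟨hpB, hpC⟩)) (WithTop.coe_le_coe.2 hpm)

/-- The "gap" contradiction: if `B ⊆ M`, every element of `M` below `w` is in `B`,
`w ∈ M`, every element of `B` is `< c`, and `c < w`, then `¬ lexLE (insert c B) M`. -/
theorem not_lexLE_gap {B M : Finset ℕ} {c w : ℕ} (hBM : B ⊆ M)
    (hgap : ∀ a ∈ M, a < w → a ∈ B) (hw : w ∈ M) (hBc : ∀ b ∈ B, b < c) (hcw : c < w) :
    ¬ lexLE (insert c B) M := by
  intro h
  unfold lexLE at h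
  have hcM : c ∉ M := fun hc => absurd (hBc c (hgap c hc hcw)) (lt_irrefl c)
  have hdiff1 : (insert c B) \ M = {c} := by
    ext x
    simp only [Finset.mem_sdiff, Finset.mem_insert, Finset.mem_singleton]
    constructor
    · rintro ⟨hx1 | hx2, hx3⟩
      · exact hx1
      · exact absurd (hBM hx2) hx3
    · rintro rfl; exact ⟨Or.inl rfl, hcM⟩
  have hwmem : w ∈ M \ (insert c B) := by
    simp only [Finset.mem_sdiff, Finset.mem_insert]
    refine ⟨hw, ?_⟩
    rintro (rfl | hwB)
    · exact absurd hcw (lt_irrefl _)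
    · exact absurd (hBc _ hwB) (by omega)
  have hmin2 : ∀ x ∈ M \ (insert c B), w ≤ x := by
    intro x hx
    simp only [Finset.mem_sdiff, Finset.mem_insert] at hx
    by_contra hlt
    exact hx.2 (Or.inr (hgap x hx.1 (by omega)))
  rw [hdiff1] at h
  have : (M \ insert c B).min ≤ (c : ℕ∞) := le_trans h (Finset.min_le (Finset.mem_singleton_self c))
  obtain ⟨n, hn, hnc⟩ := getwit this
  have := hmin2 n hn
  omega

/-- adding a strictly larger element to a set makes it lex-larger, never lex-le back. -/
theorem not_lexLE_insert_big {A : Finset ℕ} {c : ℕ} (hc : c ∉ A) :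
    ¬ lexLE (insert c A) A := by
  intro h
  have := eq_of_lexLE_of_subset h (Finset.subset_insert _ _)
  exact hc (this ▸ Finset.mem_insert_self c A)

/-- stripping a common maximal element -/
theorem lexLE_insert_iff {A B : Finset ℕ} {m : ℕ} (hA : ∀ a ∈ A, a < m) (hB : ∀ b ∈ B, b < m) :
    lexLE (insert m A) (insert m B) ↔ lexLE A B := by
  have h1 : (insert m B) \ (insert m A) = B \ A := by
    ext x
    simp only [Finset.mem_sdiff, Finset.mem_insert]
    constructor
    · rintro ⟨hx1 | hx1, hx2⟩
      · subst hx1; exact absurd (Or.inl rfl) hx2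
      · exact ⟨hx1, fun hxA => hx2 (Or.inr hxA)⟩
    · rintro ⟨hx1, hx2⟩
      refine ⟨Or.inr hx1, ?_⟩
      rintro (rfl | hxA)
      · exact absurd (hB _ hx1) (lt_irrefl _)
      · exact hx2 hxA
  have h2 : (insert m A) \ (insert m B) = A \ B := by
    ext x
    simp only [Finset.mem_sdiff, Finset.mem_insert]
    constructor
    · rintro ⟨hx1 | hx1, hx2⟩
      · subst hx1; exact absurd (Or.inl rfl) hx2
      · exact ⟨hx1, fun hxB => hx2 (Or.inr hxB)⟩
    · rintro ⟨hx1, hx2⟩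
      refine ⟨Or.inr hx1, ?_⟩
      rintro (rfl | hxB)
      · exact absurd (hA _ hx1) (lt_irrefl _)
      · exact hx2 hxB
  unfold lexLE
  rw [h1, h2]

theorem snoc_strictMono {n : ℕ} {α : Type*} [Preorder α] {f : Fin (n + 1) → α}
    (hf : StrictMono f) {x : α} (hx : ∀ i, f i < x) :
    StrictMono (Fin.snoc f x : Fin (n + 2) → α) := by
  intro i j hij
  by_cases hj : j = Fin.last _
  · subst hj
    have hi : i ≠ Fin.last _ := Fin.ne_last_of_lt hij
    obtain ⟨i', rfl⟩ := Fin.exists_castSucc_eq.2 hi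
    rw [Fin.snoc_castSucc, Fin.snoc_last]
    exact hx i'
  · obtain ⟨j', rfl⟩ := Fin.exists_castSucc_eq.2 hj
    have hi : i ≠ Fin.last _ := Fin.ne_last_of_lt (hij.trans (Fin.castSucc_lt_last j'))
    obtain ⟨i', rfl⟩ := Fin.exists_castSucc_eq.2 hi
    rw [Fin.snoc_castSucc, Fin.snoc_castSucc]
    exact hf (Fin.castSucc_lt_castSucc_iff.1 hij)

theorem cases_strictMono {n : ℕ} {α : Type*} [Preorder α] {f : Fin (n + 1) → α}
    (hf : StrictMono f) {x : α} (hx : ∀ i, x < f i) :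
    StrictMono (Fin.cases x f : Fin (n + 2) → α) := by
  intro i j hij
  induction j using Fin.cases with
  | zero => exact absurd hij (Fin.not_lt_zero _ )
  | succ j' =>
    induction i using Fin.cases with
    | zero => simp only [Fin.cases_zero, Fin.cases_succ]; exact hx j'
    | succ i' =>
      simp only [Fin.cases_succ]
      exact hf (Fin.succ_lt_succ_iff.1 hij)

/-- Push a subobject of `A` forward along a mono `A ⟶ B`. -/
noncomputable def pushMk {A B : C} (m : A ⟶ B) [Mono m] (t : Subobject A) : Subobject B :=
  Subobject.mk (t.arrow ≫ m)

theorem pushMk_le_iff {A B : C} (m : A ⟶ B) [Mono m] (t t' : Subobject A) :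
    pushMk m t ≤ pushMk m t' ↔ t ≤ t' := by
  constructor
  · intro h
    have w := Subobject.ofMkLEMk_comp h
    rw [← Category.assoc] at w
    have w2 : Subobject.ofMkLEMk _ _ h ≫ t'.arrow = t.arrow := (cancel_mono m).1 w
    conv_lhs => rw [← Subobject.mk_arrow t]
    conv_rhs => rw [← Subobject.mk_arrow t']
    exact Subobject.mk_le_mk_of_comm _ w2
  · intro h
    exact Subobject.mk_le_mk_of_comm (Subobject.ofLE t t' h)
      (by rw [← Category.assoc, Subobject.ofLE_arrow])

theorem pushMk_strictMono {A B : C} (m : A ⟶ B) [Mono m] : StrictMono (pushMk m) :=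
  fun t t' h => lt_of_le_of_ne ((pushMk_le_iff m t t').2 h.le)
    (fun he => h.ne (le_antisymm ((pushMk_le_iff m t t').1 (le_of_eq he))
      ((pushMk_le_iff m t' t).1 (le_of_eq he.symm))))

/-- The underlying object of a pushed subobject. -/
noncomputable def pushMkIso {A B : C} (m : A ⟶ B) [Mono m] (t : Subobject A) :
    ((pushMk m t : Subobject B) : C) ≅ (t : C) :=
  Subobject.underlyingIso _

theorem pushMk_top {A B : C} (m : A ⟶ B) [Mono m] : pushMk m ⊤ = Subobject.mk m := by
  unfold pushMk
  exact Subobject.mk_eq_mk_of_comm _ _ (asIso ((⊤ : Subobject A).arrow)) rfl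

section Len

variable (len : C → ℕ) (hlen : ∀ Z : C, ObjLength Z (len Z))

include hlen

theorem len_le_of_mono {A B : C} (m : A ⟶ B) [Mono m] : len A ≤ len B := by
  obtain ⟨⟨f, hf, -, -⟩, -⟩ := hlen A
  exact (hlen B).2 _ (fun t => pushMk m (f t)) (fun i j h => pushMk_strictMono m (hf h))

theorem len_iso {A B : C} (e : A ≅ B) : len A = len B :=
  le_antisymm (len_le_of_mono len hlen e.hom) (len_le_of_mono len hlen e.inv)

theorem len_subobject_le {B : C} (t : Subobject B) : len (t : C) ≤ len B :=
  len_le_of_mono len hlen t.arrow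

theorem len_lt_of_ne_top {B : C} (t : Subobject B) (ht : t ≠ ⊤) : len (t : C) < len B := by
  obtain ⟨⟨f, hf, -, hftop⟩, -⟩ := hlen (t : C)
  have hchain : StrictMono (Fin.snoc (fun i => pushMk t.arrow (f i)) ⊤ :
      Fin (len (t : C) + 2) → Subobject B) := by
    apply snoc_strictMono (fun i j h => pushMk_strictMono t.arrow (hf h))
    intro i
    calc pushMk t.arrow (f i) ≤ pushMk t.arrow ⊤ := (pushMk_le_iff _ _ _).2 le_top
    _ = Subobject.mk t.arrow := pushMk_top t.arrow
    _ = t := Subobject.mk_arrow t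
    _ < ⊤ := lt_of_le_of_ne le_top ht
  have := (hlen B).2 _ _ hchain
  omega

theorem isIso_of_mono_of_len_eq {A B : C} (m : A ⟶ B) [Mono m] (h : len A = len B) :
    IsIso m := by
  refine (Subobject.isIso_iff_mk_eq_top m).2 ?_
  by_contra hne
  have h1 : len ((Subobject.mk m : Subobject B) : C) < len B := len_lt_of_ne_top len hlen _ hne
  have h2 : len ((Subobject.mk m : Subobject B) : C) = len A :=
    len_iso len hlen (Subobject.underlyingIso m)
  omega

theorem isZero_of_mono_isZero {A B : C} (m : A ⟶ B) [Mono m] (h : IsZero B) : IsZero A := by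
  rw [IsZero.iff_id_eq_zero]
  exact (cancel_mono m).1 (by rw [Category.id_comp, zero_comp]; exact h.eq_of_tgt m 0)

/-- length drops strictly along a non-mono epi. -/
theorem len_lt_of_epi_not_mono {A B : C} (q : A ⟶ B) [Epi q] (hq : ¬ Mono q) :
    len B < len A := by
  classical
  -- the pullback map on subobjects
  let F : Subobject B → Subobject A := fun t => Subobject.mk (pullback.snd t.arrow q)
  have Fmono : ∀ t t' : Subobject B, t ≤ t' → F t ≤ F t' := by
    intro t t' h
    refine Subobject.mk_le_mk_of_comm
      (pullback.lift (pullback.fst t.arrow q ≫ Subobject.ofLE t t' h) (pullback.snd t.arrow q)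
        (by rw [Category.assoc, Subobject.ofLE_arrow]; exact pullback.condition)) ?_
    exact pullback.lift_snd _ _ _
  have Finj : ∀ t t' : Subobject B, F t = F t' → t ≤ t' := by
    intro t t' h
    have hle : F t ≤ F t' := le_of_eq h
    let u : pullback t.arrow q ⟶ pullback t'.arrow q := Subobject.ofMkLEMk _ _ hle
    have hu : u ≫ pullback.snd t'.arrow q = pullback.snd t.arrow q :=
      Subobject.ofMkLEMk_comp hle
    have hker : kernel.ι (pullback.fst t.arrow q) ≫ (u ≫ pullback.fst t'.arrow q) = 0 := by
      apply zero_of_comp_mono t'.arrow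
      calc (kernel.ι (pullback.fst t.arrow q) ≫ (u ≫ pullback.fst t'.arrow q)) ≫ t'.arrow
          = kernel.ι (pullback.fst t.arrow q) ≫ u ≫ (pullback.fst t'.arrow q ≫ t'.arrow) := by
            simp only [Category.assoc]
        _ = kernel.ι (pullback.fst t.arrow q) ≫ u ≫ (pullback.snd t'.arrow q ≫ q) := by
            rw [pullback.condition]
        _ = kernel.ι (pullback.fst t.arrow q) ≫ (u ≫ pullback.snd t'.arrow q) ≫ q := by
            simp only [Category.assoc]
        _ = kernel.ι (pullback.fst t.arrow q) ≫ pullback.snd t.arrow q ≫ q := by rw [hu]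
        _ = kernel.ι (pullback.fst t.arrow q) ≫ pullback.fst t.arrow q ≫ t.arrow := by
            rw [pullback.condition]
        _ = (kernel.ι (pullback.fst t.arrow q) ≫ pullback.fst t.arrow q) ≫ t.arrow := by
            simp only [Category.assoc]
        _ = 0 := by rw [kernel.condition, zero_comp]
    let v : (t : C) ⟶ (t' : C) :=
      Abelian.epiDesc (pullback.fst t.arrow q) (u ≫ pullback.fst t'.arrow q) hker
    have hv : pullback.fst t.arrow q ≫ v = u ≫ pullback.fst t'.arrow q :=
      Abelian.comp_epiDesc _ _ _
    refine Subobject.le_of_comm v ?_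
    have hcan : pullback.fst t.arrow q ≫ v ≫ t'.arrow = pullback.fst t.arrow q ≫ t.arrow := by
      calc pullback.fst t.arrow q ≫ v ≫ t'.arrow
          = (pullback.fst t.arrow q ≫ v) ≫ t'.arrow := by simp only [Category.assoc]
        _ = (u ≫ pullback.fst t'.arrow q) ≫ t'.arrow := by rw [hv]
        _ = u ≫ (pullback.fst t'.arrow q ≫ t'.arrow) := by simp only [Category.assoc]
        _ = u ≫ (pullback.snd t'.arrow q ≫ q) := by rw [pullback.condition]
        _ = (u ≫ pullback.snd t'.arrow q) ≫ q := by simp only [Category.assoc]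
        _ = pullback.snd t.arrow q ≫ q := by rw [hu]
        _ = pullback.fst t.arrow q ≫ t.arrow := by rw [pullback.condition]
    exact (cancel_epi (pullback.fst t.arrow q)).1 hcan
  have Fstrict : ∀ t t' : Subobject B, t < t' → F t < F t' := by
    intro t t' h
    refine lt_of_le_of_ne (Fmono _ _ h.le) (fun he => ?_)
    exact absurd (le_antisymm h.le (Finj t' t he.symm)) h.ne
  -- the kernel is below the pullback of ⊥
  have hker_le : kernelSubobject q ≤ F ⊥ := by
    refine Subobject.mk_le_mk_of_comm
      (pullback.lift 0 (kernel.ι q) (by rw [zero_comp, kernel.condition])) ?_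
    exact pullback.lift_snd _ _ _
  have hker_ne : kernelSubobject q ≠ ⊥ := by
    intro h
    apply hq
    apply Preadditive.mono_of_cancel_zero
    intro P g hg
    have hfac := factorThruKernelSubobject_comp_arrow q g hg
    have := Subobject.ofLE_arrow (le_of_eq h)
    rw [← this, Subobject.bot_arrow, comp_zero] at hfac
    rw [← hfac, comp_zero]
  obtain ⟨⟨f, hf, hbot, -⟩, -⟩ := hlen B
  have hchain : StrictMono (Fin.cases ⊥ (fun i => F (f i)) : Fin (len B + 2) → Subobject A) := by
    apply cases_strictMono (fun i j h => Fstrict _ _ (hf h))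
    intro i
    have h1 : (⊥ : Subobject A) < kernelSubobject q := bot_lt_iff_ne_bot.2 hker_ne
    have h2 : kernelSubobject q ≤ F (f i) := by
      refine le_trans hker_le ?_
      exact Fmono _ _ bot_le
    exact lt_of_lt_of_le h1 h2
  have := (hlen A).2 _ _ hchain
  omega

end Len



theorem indec_of_iso {A B : C} (e : A ≅ B) (h : Indecomposable A) : Indecomposable B := by
  refine ⟨fun hz => h.1 (hz.of_iso e), fun V W e' => h.2 V W (e.trans e')⟩

theorem isZero_of_eq_bot {B : C} (t : Subobject B) (h : IsZero ((t : Subobject B) : C)) :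
    t = ⊥ :=
  le_antisymm (Subobject.le_of_comm 0 (by rw [zero_comp]; exact (h.eq_of_src t.arrow 0).symm))
    bot_le

section Mu

variable (len : C → ℕ) (hlen : ∀ Z : C, ObjLength Z (len Z))
  (mu : C → Finset ℕ) (hmu : IsGRMeasure len mu)

include hlen

/-- Transfer of a chain value along a mono, inserting the ambient length. -/
theorem chainVal_push {A B : C} (m : A ⟶ B) [Mono m] (hB : Indecomposable B)
    {S : Finset ℕ} (hS : IsGRChainVal len A S) :
    IsGRChainVal len B (insert (len B) S) := by
  classical
  obtain ⟨s, hchain, htop, hindec, hval⟩ := hS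
  refine ⟨insert ⊤ (s.image (pushMk m)), ?_, Finset.mem_insert_self _ _, ?_, ?_⟩
  · intro a ha b hb hne
    simp only [Finset.coe_insert, Set.mem_insert_iff, Finset.coe_image, Set.mem_image,
      Finset.mem_coe] at ha hb
    rcases ha with rfl | ⟨u, hu, rfl⟩
    · exact Or.inr le_top
    · rcases hb with rfl | ⟨v, hv, rfl⟩
      · exact Or.inl le_top
      · by_cases huv : u = v
        · exact absurd (huv ▸ rfl) hne
        · rcases hchain hu hv huv with h | h
          · exact Or.inl ((pushMk_le_iff m u v).2 h)
          · exact Or.inr ((pushMk_le_iff m v u).2 h)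
  · intro t ht
    rcases Finset.mem_insert.1 ht with rfl | ht
    · exact indec_of_iso (asIso (⊤ : Subobject B).arrow).symm hB
    · obtain ⟨u, hu, rfl⟩ := Finset.mem_image.1 ht
      exact indec_of_iso (Subobject.underlyingIso _).symm (hindec u hu)
  · rw [Finset.image_insert, Finset.image_image]
    congr 1
    · exact len_iso len hlen (asIso (⊤ : Subobject B).arrow)
    · rw [← hval]
      apply Finset.image_congr
      intro u hu
      exact len_iso len hlen (Subobject.underlyingIso _)

/-- Transfer of a chain value along an iso. -/
theorem chainVal_iso {A B : C} (e : A ≅ B) {S : Finset ℕ} (hS : IsGRChainVal len A S) :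
    IsGRChainVal len B S := by
  classical
  obtain ⟨s, hchain, htop, hindec, hval⟩ := hS
  haveI : Mono e.hom := inferInstance
  refine ⟨s.image (pushMk e.hom), ?_, ?_, ?_, ?_⟩
  · intro a ha b hb hne
    simp only [Finset.coe_image, Set.mem_image, Finset.mem_coe] at ha hb
    obtain ⟨u, hu, rfl⟩ := ha
    obtain ⟨v, hv, rfl⟩ := hb
    by_cases huv : u = v
    · exact absurd (huv ▸ rfl) hne
    · rcases hchain hu hv huv with h | h
      · exact Or.inl ((pushMk_le_iff e.hom u v).2 h)
      · exact Or.inr ((pushMk_le_iff e.hom v u).2 h)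
  · refine Finset.mem_image.2 ⟨⊤, htop, ?_⟩
    rw [pushMk_top]
    exact Subobject.mk_eq_top_of_isIso e.hom
  · intro t ht
    obtain ⟨u, hu, rfl⟩ := Finset.mem_image.1 ht
    exact indec_of_iso (Subobject.underlyingIso _).symm (hindec u hu)
  · rw [Finset.image_image, ← hval]
    apply Finset.image_congr
    intro u hu
    exact len_iso len hlen (Subobject.underlyingIso _)

include hmu

theorem mu_iso {A B : C} (e : A ≅ B) (hA : Indecomposable A) : mu A = mu B := by
  have hB : Indecomposable B := indec_of_iso e hA
  exact lexLE_antisymm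
    ((hmu B hB).2 _ (chainVal_iso len hlen e (hmu A hA).1))
    ((hmu A hA).2 _ (chainVal_iso len hlen e.symm (hmu B hB).1))

theorem len_mem_mu {B : C} (hB : Indecomposable B) : len B ∈ mu B := by
  obtain ⟨s, -, htop, -, hval⟩ := (hmu B hB).1
  rw [← hval]
  refine Finset.mem_image.2 ⟨⊤, htop, ?_⟩
  exact (len_iso len hlen (asIso (⊤ : Subobject B).arrow))

theorem mu_elts_le {B : C} (hB : Indecomposable B)
    {a : ℕ} (ha : a ∈ mu B) : a ≤ len B := by
  obtain ⟨s, -, -, -, hval⟩ := (hmu B hB).1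
  rw [← hval] at ha
  obtain ⟨u, -, rfl⟩ := Finset.mem_image.1 ha
  exact len_subobject_le len hlen u

/-- pushing the best chain of `A` into `B` along a mono. -/
theorem mu_insert_le {A B : C} (m : A ⟶ B) [Mono m] (hA : Indecomposable A)
    (hB : Indecomposable B) : lexLE (insert (len B) (mu A)) (mu B) :=
  (hmu B hB).2 _ (chainVal_push len hlen m hB (hmu A hA).1)

omit hmu in
theorem len_zero_of_isZero {A : C} (h : IsZero A) : len A = 0 := by
  by_contra hne
  obtain ⟨f, hf, -, -⟩ := (hlen A).1
  have h01 : f 0 < f ⟨1, by omega⟩ := hf (by simp [Fin.lt_def])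
  have hle : ∀ t s : Subobject A, t ≤ s := by
    intro t s
    refine Subobject.le_of_comm 0 ?_
    rw [zero_comp]
    exact (h.eq_of_tgt t.arrow 0).symm
  exact absurd (hle (f ⟨1, by omega⟩) (f 0)) (not_le_of_gt h01)

omit hmu in
theorem isZero_of_len_zero {A : C} (h : len A = 0) : IsZero A := by
  obtain ⟨f, hf, hbot, htop⟩ := (hlen A).1
  have hlast : Fin.last (len A) = (0 : Fin (len A + 1)) := by
    ext
    simp [h]
  have hbt : (⊤ : Subobject A) = ⊥ := by rw [← htop, hlast, hbot]
  have harr : (⊤ : Subobject A).arrow = 0 := by rw [hbt, Subobject.bot_arrow]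
  rw [IsZero.iff_id_eq_zero]
  calc 𝟙 A = inv ((⊤ : Subobject A).arrow) ≫ (⊤ : Subobject A).arrow :=
        (IsIso.inv_hom_id _).symm
  _ = inv ((⊤ : Subobject A).arrow) ≫ 0 := by
        exact congrArg (fun g => inv ((⊤ : Subobject A).arrow) ≫ g) harr
  _ = 0 := comp_zero

omit hmu in
theorem nonzero_of_ne_bot {B : C} {t : Subobject B} (h : t ≠ ⊥) :
    ¬ IsZero ((t : Subobject B) : C) :=
  fun hz => h (isZero_of_eq_bot t hz)

omit hmu in
theorem indec_of_len_one {A : C} (h : len A = 1) : Indecomposable A := by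
  constructor
  · intro hz
    rw [len_zero_of_isZero len hlen hz] at h
    omega
  · intro V W e
    haveI : Mono ((biprod.inl : V ⟶ V ⊞ W) ≫ e.inv) := mono_comp _ _
    have hV : len V ≤ 1 := h ▸ len_le_of_mono len hlen ((biprod.inl : V ⟶ V ⊞ W) ≫ e.inv)
    interval_cases hlv : len V
    · exact Or.inl (isZero_of_len_zero len hlen hlv)
    · right
      have : IsIso ((biprod.inl : V ⟶ V ⊞ W) ≫ e.inv) :=
        isIso_of_mono_of_len_eq len hlen _ (by omega)
      have hinl : IsIso (biprod.inl : V ⟶ V ⊞ W) := by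
        have : ((biprod.inl : V ⟶ V ⊞ W) ≫ e.inv) ≫ e.hom = biprod.inl := by simp
        rw [← this]
        infer_instance
      have hsnd : (biprod.snd : V ⊞ W ⟶ W) = 0 := by
        haveI := hinl
        rw [← cancel_epi (biprod.inl : V ⟶ V ⊞ W), biprod.inl_snd, comp_zero]
      rw [IsZero.iff_id_eq_zero, ← biprod.inr_snd (X := V) (Y := W), hsnd, comp_zero]

omit hmu in
theorem exists_len_one_subobject {B : C} (hB : ¬ IsZero B) :
    ∃ S : Subobject B, len ((S : Subobject B) : C) = 1 := by
  classical
  set N : Set ℕ := {n | ∃ u : Subobject B, ¬ IsZero ((u : Subobject B) : C) ∧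
    len ((u : Subobject B) : C) = n} with hN
  have hmem : len ((⊤ : Subobject B) : C) ∈ N := by
    refine ⟨⊤, fun hz => hB (hz.of_iso (asIso (⊤ : Subobject B).arrow).symm), rfl⟩
  have hnonempty : N.Nonempty := ⟨_, hmem⟩
  obtain ⟨u, hu, hulen⟩ := Nat.sInf_mem hnonempty
  have h1le : 1 ≤ sInf N := by
    by_contra h0
    have : sInf N = 0 := by omega
    rw [this] at hulen
    exact hu (isZero_of_len_zero len hlen hulen)
  by_cases h2 : 2 ≤ sInf N
  · exfalso
    have hl2 : 2 ≤ len ((u : Subobject B) : C) := by omega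
    obtain ⟨f, hf, hfbot, hftop⟩ := (hlen ((u : Subobject B) : C)).1
    have h01 : f 0 < f ⟨1, by omega⟩ := hf (by simp [Fin.lt_def])
    have h1l : f ⟨1, by omega⟩ < f (Fin.last _) := by
      apply hf
      simp only [Fin.lt_def, Fin.val_last]
      omega
    rw [hfbot] at h01
    rw [hftop] at h1l
    have hlt : len ((f ⟨1, by omega⟩ : Subobject ((u : Subobject B) : C)) : C)
        < len ((u : Subobject B) : C) :=
      len_lt_of_ne_top len hlen _ h1l.ne
    have hnz : ¬ IsZero ((f ⟨1, by omega⟩ : Subobject ((u : Subobject B) : C)) : C) :=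
      nonzero_of_ne_bot len hlen h01.ne'
    have hpush_mem : len ((pushMk u.arrow (f ⟨1, by omega⟩) : Subobject B) : C) ∈ N := by
      refine ⟨pushMk u.arrow (f ⟨1, by omega⟩), ?_, rfl⟩
      intro hz
      exact hnz (hz.of_iso (Subobject.underlyingIso _).symm)
    have hpush_len : len ((pushMk u.arrow (f ⟨1, by omega⟩) : Subobject B) : C)
        = len ((f ⟨1, by omega⟩ : Subobject ((u : Subobject B) : C)) : C) :=
      len_iso len hlen (Subobject.underlyingIso _)
    have hinf := Nat.sInf_le hpush_mem
    rw [hpush_len] at hinf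
    omega
  · exact ⟨u, by omega⟩

/-- Existence of the Gabriel–Roiter submodule: the maximal proper member of an optimal chain. -/
theorem gr_submodule {B : C} (hB : Indecomposable B) (h2 : 2 ≤ len B) :
    ∃ w : Subobject B, w ≠ ⊤ ∧ Indecomposable ((w : Subobject B) : C) ∧
      mu ((w : Subobject B) : C) = (mu B).erase (len B) := by
  classical
  obtain ⟨s, hchain, htop, hindec, hval⟩ := (hmu B hB).1
  have hlen_top : len (((⊤ : Subobject B) : Subobject B) : C) = len B :=
    len_iso len hlen (asIso (⊤ : Subobject B).arrow)
  by_cases hne : (s.erase ⊤).Nonempty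
  · obtain ⟨w, hw, hwmax⟩ : ∃ w ∈ s.erase ⊤, ∀ x ∈ s.erase ⊤, ¬ w < x := by
      obtain ⟨w, hw⟩ := Finset.exists_maximal hne
      exact ⟨w, hw.1, fun x hx hlt => hlt.not_ge (hw.2 hx hlt.le)⟩
    have hwne : w ≠ ⊤ := (Finset.mem_erase.1 hw).1
    have hws : w ∈ s := (Finset.mem_erase.1 hw).2
    have hwle : ∀ u ∈ s.erase ⊤, u ≤ w := by
      intro u hu
      by_cases huw : u = w
      · exact le_of_eq huw
      · rcases hchain (Finset.mem_coe.2 (Finset.mem_erase.1 hu).2) (Finset.mem_coe.2 hws) huw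
          with h | h
        · exact h
        · exact absurd (lt_of_le_of_ne h (Ne.symm huw)) (hwmax u hu)
    set W := ((w : Subobject B) : C) with hW
    have hindecW : Indecomposable W := hindec w hws
    set D := (s.erase ⊤).image (fun u : Subobject B => len ((u : Subobject B) : C)) with hD
    have hDmuB : mu B = insert (len B) D := by
      rw [← hval]
      conv_lhs => rw [← Finset.insert_erase htop]
      rw [Finset.image_insert, hlen_top]
    have hlenBD : len B ∉ D := by
      intro hmem
      obtain ⟨u, hu, hueq⟩ := Finset.mem_image.1 hmem
      have := len_lt_of_ne_top len hlen u (Finset.mem_erase.1 hu).1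
      omega
    have hDerase : D = (mu B).erase (len B) := by
      rw [hDmuB, Finset.erase_insert hlenBD]
    -- rebase the chain below w into W
    have hDval : IsGRChainVal len W D := by
      set r : Subobject B → Subobject W := fun u =>
        if h : u ≤ w then Subobject.mk (Subobject.ofLE u w h) else ⊤ with hr
      have hrval : ∀ u (h : u ≤ w), r u = Subobject.mk (Subobject.ofLE u w h) := by
        intro u h
        simp only [hr, dif_pos h]
      have hrle : ∀ u v (hu : u ≤ w) (hv : v ≤ w), u ≤ v → r u ≤ r v := by
        intro u v hu hv huv
        rw [hrval u hu, hrval v hv]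
        refine Subobject.mk_le_mk_of_comm (Subobject.ofLE u v huv) ?_
        rw [Subobject.ofLE_comp_ofLE]
      refine ⟨(s.erase ⊤).image r, ?_, ?_, ?_, ?_⟩
      · intro a ha b hb hne'
        simp only [Finset.coe_image, Set.mem_image, Finset.mem_coe] at ha hb
        obtain ⟨u, hu, rfl⟩ := ha
        obtain ⟨v, hv, rfl⟩ := hb
        by_cases huv : u = v
        · exact absurd (huv ▸ rfl) hne'
        · rcases hchain (Finset.mem_coe.2 (Finset.mem_erase.1 hu).2)
            (Finset.mem_coe.2 (Finset.mem_erase.1 hv).2) huv with h | h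
          · exact Or.inl (hrle u v (hwle u hu) (hwle v hv) h)
          · exact Or.inr (hrle v u (hwle v hv) (hwle u hu) h)
      · refine Finset.mem_image.2 ⟨w, hw, ?_⟩
        rw [hrval w le_rfl]
        haveI : IsIso (Subobject.ofLE w w le_rfl) := by
          rw [Subobject.ofLE_refl]
          infer_instance
        exact Subobject.mk_eq_top_of_isIso _
      · intro t ht
        obtain ⟨u, hu, rfl⟩ := Finset.mem_image.1 ht
        rw [hrval u (hwle u hu)]
        exact indec_of_iso (Subobject.underlyingIso _).symm
          (hindec u (Finset.mem_erase.1 hu).2)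
      · rw [Finset.image_image, hD]
        apply Finset.image_congr
        intro u hu
        simp only [Function.comp_apply]
        rw [hrval u (hwle u hu)]
        exact len_iso len hlen (Subobject.underlyingIso _)
    have h1 : lexLE D (mu W) := (hmu W hindecW).2 _ hDval
    have h2' : lexLE (insert (len B) (mu W)) (mu B) :=
      mu_insert_le len hlen mu hmu w.arrow hindecW hB
    rw [hDmuB] at h2'
    have hmuWlt : ∀ a ∈ mu W, a < len B := by
      intro a ha
      have h3 := mu_elts_le len hlen mu hmu hindecW ha
      have h4 := len_lt_of_ne_top len hlen w hwne
      have h5 : len W = len ((w : Subobject B) : C) := rfl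
      omega
    have hDlt : ∀ a ∈ D, a < len B := by
      intro a ha
      obtain ⟨u, hu, rfl⟩ := Finset.mem_image.1 ha
      exact len_lt_of_ne_top len hlen u (Finset.mem_erase.1 hu).1
    have h5 : lexLE (mu W) D := (lexLE_insert_iff hmuWlt hDlt).1 h2'
    exact ⟨w, hwne, hindecW, by rw [lexLE_antisymm h5 h1, hDerase]⟩
  · exfalso
    -- the optimal chain is just {⊤}; extend it by a length-one subobject
    have herase : s.erase ⊤ = ∅ := Finset.not_nonempty_iff_eq_empty.1 hne
    have hall : ∀ u ∈ s, u = ⊤ := by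
      intro u hu
      by_contra hne'
      have hmem := Finset.mem_erase.2 ⟨hne', hu⟩
      rw [herase] at hmem
      exact Finset.notMem_empty u hmem
    have hmuB : mu B = {len B} := by
      rw [← hval]
      apply Finset.eq_singleton_iff_unique_mem.2
      constructor
      · exact Finset.mem_image.2 ⟨⊤, htop, hlen_top⟩
      · intro a ha
        obtain ⟨u, hu, rfl⟩ := Finset.mem_image.1 ha
        rw [hall u hu]
        exact hlen_top
    obtain ⟨S, hS1⟩ := exists_len_one_subobject len hlen (fun hz => hB.1 hz)
    have hSneTop : S ≠ ⊤ := by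
      intro h
      rw [h, hlen_top] at hS1
      omega
    have hval2 : IsGRChainVal len B (insert (len ((S : Subobject B) : C)) {len B}) := by
      classical
      refine ⟨insert S {⊤}, ?_, ?_, ?_, ?_⟩
      · intro a ha b hb hne'
        simp only [Finset.coe_insert, Set.mem_insert_iff, Finset.coe_singleton,
          Set.mem_singleton_iff] at ha hb
        rcases ha with rfl | rfl <;> rcases hb with rfl | rfl
        · exact absurd rfl hne'
        · exact Or.inl le_top
        · exact Or.inr le_top
        · exact absurd rfl hne'
      · exact Finset.mem_insert.2 (Or.inr (Finset.mem_singleton_self _))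
      · intro t ht
        rcases Finset.mem_insert.1 ht with rfl | ht
        · exact indec_of_len_one len hlen hS1
        · rw [Finset.mem_singleton.1 ht]
          exact indec_of_iso (asIso (⊤ : Subobject B).arrow).symm hB
      · rw [Finset.image_insert, Finset.image_singleton, hlen_top]
    rw [hS1] at hval2
    have h6 := (hmu B hB).2 _ hval2
    rw [hmuB] at h6
    have h7 := eq_of_lexLE_of_subset h6 (Finset.subset_insert _ _)
    have h8 : (1 : ℕ) ∈ ({len B} : Finset ℕ) := h7 ▸ Finset.mem_insert_self 1 {len B}
    rw [Finset.mem_singleton] at h8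
    omega
  

end Mu

end GR


namespace GR

/-- A retraction exhibits the source as a biproduct summand. -/
noncomputable def splitIso {X U : C} (f : X ⟶ U) (r : U ⟶ X) (h : f ≫ r = 𝟙 X) :
    U ≅ X ⊞ kernel r := by
  have he : (𝟙 U - r ≫ f) ≫ r = 0 := by
    simp only [Preadditive.sub_comp, Category.id_comp, Category.assoc, h, Category.comp_id,
      sub_self]
  refine ⟨biprod.lift r (kernel.lift r (𝟙 U - r ≫ f) he), biprod.desc f (kernel.ι r), ?_, ?_⟩
  · rw [biprod.lift_desc, kernel.lift_ι]
    simp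
  · have hfk : f ≫ kernel.lift r (𝟙 U - r ≫ f) he = 0 := by
      rw [← cancel_mono (kernel.ι r), Category.assoc, kernel.lift_ι, zero_comp]
      simp only [Preadditive.comp_sub, Category.comp_id, ← Category.assoc, h, Category.id_comp,
        sub_self]
    have hkk : kernel.ι r ≫ kernel.lift r (𝟙 U - r ≫ f) he = 𝟙 (kernel r) := by
      rw [← cancel_mono (kernel.ι r), Category.assoc, kernel.lift_ι, Category.id_comp]
      simp only [Preadditive.comp_sub, Category.comp_id, ← Category.assoc, kernel.condition,
        zero_comp, sub_zero]
    apply biprod.hom_ext'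
    · apply biprod.hom_ext <;> simp [h, hfk]
    · apply biprod.hom_ext <;> simp [hkk, kernel.condition]

theorem splitIso_inv {X U : C} (f : X ⟶ U) (r : U ⟶ X) (h : f ≫ r = 𝟙 X) :
    (splitIso f r h).inv = biprod.desc f (kernel.ι r) := rfl

theorem isZero_of_isZero_biprod {A B : C} (hA : IsZero A) (hB : IsZero B) :
    IsZero (A ⊞ B) := by
  rw [IsZero.iff_id_eq_zero]
  apply biprod.hom_ext
  · exact hA.eq_of_tgt _ _
  · exact hB.eq_of_tgt _ _

theorem isIso_inl_of_isZero_right {A B : C} (hB : IsZero B) :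
    IsIso (biprod.inl : A ⟶ A ⊞ B) := by
  refine ⟨biprod.fst, biprod.inl_fst, ?_⟩
  have hsnd : (biprod.snd : A ⊞ B ⟶ B) = 0 := hB.eq_of_tgt _ _
  have := biprod.total (X := A) (Y := B)
  rw [hsnd, zero_comp, add_zero] at this
  exact this

/-- a split mono with indecomposable target is zero-source or iso. -/
theorem no_proper_summand {A W : C} (hW : Indecomposable W) (i : A ⟶ W) (r : W ⟶ A)
    (hri : i ≫ r = 𝟙 A) (hA : ¬ IsZero A) (hni : ¬ IsIso i) : False := by
  rcases hW.2 _ _ (splitIso i r hri) with hz | hz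
  · exact hA hz
  · apply hni
    haveI h1 : IsIso (biprod.inl : A ⟶ A ⊞ kernel r) := isIso_inl_of_isZero_right hz
    have h2 : (biprod.inl : A ⟶ A ⊞ kernel r) ≫ (splitIso i r hri).inv = i := by
      rw [splitIso_inv, biprod.inl_desc]
    rw [← h2]
    infer_instance

theorem mono_noniso_comp {D V Y : C} (m : V ⟶ D) [Mono m] (p : D ⟶ Y) [Mono p]
    (hp : ¬ IsIso p) : Mono (m ≫ p) ∧ ¬ IsIso (m ≫ p) := by
  refine ⟨mono_comp _ _, fun hiso => hp ?_⟩
  haveI : Epi (m ≫ p) := by infer_instance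
  haveI : Epi p := epi_of_epi m p
  exact isIso_of_mono_of_epi p

theorem isZero_right_of_isIso_inl_comp {A V W : C} (e : A ≅ V ⊞ W)
    (h : IsIso ((biprod.inl : V ⟶ V ⊞ W) ≫ e.inv)) : IsZero W := by
  have hinl : IsIso (biprod.inl : V ⟶ V ⊞ W) := by
    have heq : ((biprod.inl : V ⟶ V ⊞ W) ≫ e.inv) ≫ e.hom = biprod.inl := by simp
    rw [← heq]
    infer_instance
  have hsnd : (biprod.snd : V ⊞ W ⟶ W) = 0 := by
    haveI := hinl
    rw [← cancel_epi (biprod.inl : V ⟶ V ⊞ W), biprod.inl_snd, comp_zero]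
  rw [IsZero.iff_id_eq_zero, ← biprod.inr_snd (X := V) (Y := W), hsnd, comp_zero]

theorem isZero_left_of_isIso_inr_comp {A V W : C} (e : A ≅ V ⊞ W)
    (h : IsIso ((biprod.inr : W ⟶ V ⊞ W) ≫ e.inv)) : IsZero V := by
  have hinr : IsIso (biprod.inr : W ⟶ V ⊞ W) := by
    have heq : ((biprod.inr : W ⟶ V ⊞ W) ≫ e.inv) ≫ e.hom = biprod.inr := by simp
    rw [← heq]
    infer_instance
  have hfst : (biprod.fst : V ⊞ W ⟶ V) = 0 := by
    haveI := hinr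
    rw [← cancel_epi (biprod.inr : W ⟶ V ⊞ W), biprod.inr_fst, comp_zero]
  rw [IsZero.iff_id_eq_zero, ← biprod.inl_fst (X := V) (Y := W), hfst, comp_zero]

theorem decompose_of_not_indec {U : C} (h : ¬ Indecomposable U) (hz : ¬ IsZero U) :
    ∃ (V W : C), Nonempty (U ≅ V ⊞ W) ∧ ¬ IsZero V ∧ ¬ IsZero W := by
  by_contra hcon
  push_neg at hcon
  apply h
  refine ⟨hz, fun V W e => ?_⟩
  by_cases hV : IsZero V
  · exact Or.inl hV
  · exact Or.inr (hcon V W ⟨e⟩ hV)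

theorem mono_biprod_map {A B A' B' : C} (mA : A ⟶ A') (mB : B ⟶ B') [Mono mA] [Mono mB] :
    Mono (biprod.map mA mB) := by
  apply Preadditive.mono_of_cancel_zero
  intro P g hg
  have h1 : g ≫ biprod.fst = 0 := by
    apply zero_of_comp_mono mA
    rw [Category.assoc, ← biprod.map_fst mA mB, ← Category.assoc, hg, zero_comp]
  have h2 : g ≫ biprod.snd = 0 := by
    apply zero_of_comp_mono mB
    rw [Category.assoc, ← biprod.map_snd mA mB, ← Category.assoc, hg, zero_comp]
  apply biprod.hom_ext
  · rw [h1, zero_comp]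
  · rw [h2, zero_comp]

end GR


namespace GR

/-- Admissible decompositions: trees of proper subobjects of `Y`, each of length `< n`. -/
inductive Pieces (len : C → ℕ) (Y : C) : ℕ → C → Prop
  | zero {n : ℕ} {T : C} (h : IsZero T) : Pieces len Y n T
  | leaf {n : ℕ} {T : C} (hm : ∃ m : T ⟶ Y, Mono m ∧ ¬ IsIso m) (hi : Indecomposable T)
      (hl : len T < n) : Pieces len Y n T
  | node {n : ℕ} {T A B : C} (ha : Pieces len Y n A) (hb : Pieces len Y n B)
      (e : T ≅ A ⊞ B) : Pieces len Y n T

section PiecesSec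

variable (len : C → ℕ) (hlen : ∀ Z : C, ObjLength Z (len Z)) {Y : C}

include hlen

theorem pieces_isZero {n : ℕ} {T : C} (h : Pieces len Y n T) (hn : n ≤ 1) : IsZero T := by
  induction h with
  | zero h => exact h
  | leaf hm hi hl => exact isZero_of_len_zero len hlen (by omega)
  | node ha hb e iha ihb => exact (isZero_of_isZero_biprod iha ihb).of_iso e

theorem piecesOfSmall {n : ℕ} : ∀ (k : ℕ) (D : C), len D ≤ k →
    (∃ m : D ⟶ Y, Mono m ∧ ¬ IsIso m) → len D < n → Pieces len Y n D := by
  intro k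
  induction k with
  | zero =>
    intro D hk _ _
    exact Pieces.zero (isZero_of_len_zero len hlen (by omega))
  | succ k IH =>
    intro D hk hprop hlt
    by_cases hz : IsZero D
    · exact Pieces.zero hz
    by_cases hi : Indecomposable D
    · exact Pieces.leaf hprop hi hlt
    obtain ⟨V, W, ⟨e⟩, hV, hW⟩ := decompose_of_not_indec hi hz
    obtain ⟨p, hpm, hpni⟩ := hprop
    haveI : Mono ((biprod.inl : V ⟶ V ⊞ W) ≫ e.inv) := mono_comp _ _
    haveI : Mono ((biprod.inr : W ⟶ V ⊞ W) ≫ e.inv) := mono_comp _ _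
    have hVlt : len V < len D := by
      have h1 : len V ≤ len D := len_le_of_mono len hlen ((biprod.inl : V ⟶ V ⊞ W) ≫ e.inv)
      rcases lt_or_eq_of_le h1 with h | h
      · exact h
      · exact absurd (isZero_right_of_isIso_inl_comp e
          (isIso_of_mono_of_len_eq len hlen _ h)) hW
    have hWlt : len W < len D := by
      have h1 : len W ≤ len D := len_le_of_mono len hlen ((biprod.inr : W ⟶ V ⊞ W) ≫ e.inv)
      rcases lt_or_eq_of_le h1 with h | h
      · exact h
      · exact absurd (isZero_left_of_isIso_inr_comp e
          (isIso_of_mono_of_len_eq len hlen _ h)) hV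
    have hVprop := mono_noniso_comp ((biprod.inl : V ⟶ V ⊞ W) ≫ e.inv) p hpni
    have hWprop := mono_noniso_comp ((biprod.inr : W ⟶ V ⊞ W) ≫ e.inv) p hpni
    haveI := hVprop.1
    haveI := hWprop.1
    exact Pieces.node
      (IH V (by omega) ⟨_, hVprop.1, hVprop.2⟩ (by omega))
      (IH W (by omega) ⟨_, hWprop.1, hWprop.2⟩ (by omega)) e

end PiecesSec

section Core

variable (len : C → ℕ) (hlen : ∀ Z : C, ObjLength Z (len Z))
  (mu : C → Finset ℕ) (hmu : IsGRMeasure len mu)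
  {Y : C} (M : Finset ℕ)
  (hM : ∀ P : C, Indecomposable P → (∃ m : P ⟶ Y, Mono m ∧ ¬ IsIso m) → lexLE (mu P) M)

include hlen hmu hM

/-- The inductive shrinking step: restrict an embedding into a tree of pieces
to the Gabriel–Roiter submodule, obtaining a strictly smaller tree. -/
theorem shrink {W : C} (hW : Indecomposable W)
    (hMW : mu W ⊆ M) (hMinv : ∀ a ∈ M, a ≤ len W → a ∈ mu W) (hlenWM : len W ∈ M)
    {w' : Subobject W} (hw'ne : w' ≠ ⊤)
    (hw'ind : Indecomposable ((w' : Subobject W) : C))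
    (hw'mu : mu ((w' : Subobject W) : C) = (mu W).erase (len W))
    {T : C} (hT : Pieces len Y (len W) T) :
    ∀ ρ : W ⟶ T,
      ∃ (T' : C) (m : T' ⟶ T) (ψ : ((w' : Subobject W) : C) ⟶ T'),
        Mono m ∧ ψ ≫ m = w'.arrow ≫ ρ ∧ Pieces len Y (len ((w' : Subobject W) : C)) T' := by
  induction hT with
  | zero h =>
    intro ρ
    exact ⟨_, 𝟙 _, w'.arrow ≫ ρ, inferInstance, Category.comp_id _, Pieces.zero h⟩
  | @leaf P hm hi hl =>
    intro ρ
    set g : ((w' : Subobject W) : C) ⟶ P := w'.arrow ≫ ρ with hg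
    by_cases hmono : Mono g
    · exfalso
      have hle : len ((w' : Subobject W) : C) ≤ len P := len_le_of_mono len hlen g
      by_cases hceq : len ((w' : Subobject W) : C) = len P
      · -- iso, contradicting indecomposability of W
        haveI := isIso_of_mono_of_len_eq len hlen g hceq
        have hret : w'.arrow ≫ (ρ ≫ inv g) = 𝟙 _ := by
          rw [← Category.assoc, ← hg, IsIso.hom_inv_id]
        exact no_proper_summand hW w'.arrow (ρ ≫ inv g) hret hw'ind.1
          (fun hiso => hw'ne ((Subobject.isIso_arrow_iff_eq_top w').1 hiso))
      · -- the gap contradiction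
        have hcl : len ((w' : Subobject W) : C) < len P := by omega
        have h1 : lexLE (insert (len P) (mu ((w' : Subobject W) : C))) (mu P) :=
          (hmu P hi).2 _ (chainVal_push len hlen g hi (hmu _ hw'ind).1)
        have h2 : lexLE (mu P) M := hM P hi hm
        have h3 := lexLE_trans h1 h2
        refine not_lexLE_gap ?_ ?_ hlenWM ?_ ?_ h3
        · rw [hw'mu]
          exact fun a ha => hMW (Finset.mem_of_mem_erase ha)
        · intro a haM halt
          rw [hw'mu]
          exact Finset.mem_erase.2 ⟨by omega, hMinv a haM (by omega)⟩
        · intro b hb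
          have := mu_elts_le len hlen mu hmu hw'ind hb
          omega
        · omega
    · -- pass to the image
      have hψni : ¬ Mono (Abelian.factorThruImage g) := by
        intro hc
        apply hmono
        rw [← Abelian.image.fac g]
        exact mono_comp _ _
      have hlenD : len (Abelian.image g) < len ((w' : Subobject W) : C) :=
        len_lt_of_epi_not_mono len hlen (Abelian.factorThruImage g) hψni
      obtain ⟨p, hpm, hpni⟩ := hm
      have hDprop := mono_noniso_comp (Abelian.image.ι g) p hpni
      refine ⟨Abelian.image g, Abelian.image.ι g, Abelian.factorThruImage g, inferInstance,
        Abelian.image.fac g, ?_⟩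
      exact piecesOfSmall len hlen (len (Abelian.image g)) _ le_rfl
        ⟨_, hDprop.1, hDprop.2⟩ hlenD
  | @node T' A B ha hb e iha ihb =>
    intro ρ
    obtain ⟨A', mA, ψA, hmA, hfacA, hpA⟩ := iha (ρ ≫ e.hom ≫ biprod.fst)
    obtain ⟨B', mB, ψB, hmB, hfacB, hpB⟩ := ihb (ρ ≫ e.hom ≫ biprod.snd)
    haveI := hmA
    haveI := hmB
    haveI : Mono (biprod.map mA mB) := mono_biprod_map mA mB
    refine ⟨A' ⊞ B', biprod.map mA mB ≫ e.inv, biprod.lift ψA ψB, mono_comp _ _, ?_,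
      Pieces.node hpA hpB (Iso.refl _)⟩
    have hlm : biprod.lift ψA ψB ≫ biprod.map mA mB = biprod.lift (ψA ≫ mA) (ψB ≫ mB) := by
      apply biprod.hom_ext
      · rw [Category.assoc, biprod.map_fst, biprod.lift_fst, ← Category.assoc, biprod.lift_fst]
      · rw [Category.assoc, biprod.map_snd, biprod.lift_snd, ← Category.assoc, biprod.lift_snd]
    rw [← Category.assoc, hlm, hfacA, hfacB]
    apply (cancel_mono e.hom).1
    rw [Category.assoc, e.inv_hom_id, Category.comp_id]
    apply biprod.hom_ext
    · rw [biprod.lift_fst, Category.assoc, Category.assoc]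
    · rw [biprod.lift_snd, Category.assoc, Category.assoc]

/-- No indecomposable with prefix measure embeds into a tree of strictly shorter pieces. -/
theorem rtree : ∀ (n : ℕ) (W : C), len W ≤ n → Indecomposable W →
    (∃ m : W ⟶ Y, Mono m ∧ ¬ IsIso m) → mu W ⊆ M → (∀ a ∈ M, a ≤ len W → a ∈ mu W) →
    len W ∈ M →
    ∀ {T : C}, Pieces len Y (len W) T → ∀ φ : W ⟶ T, Mono φ → False := by
  intro n
  induction n with
  | zero =>
    intro W hlW hW _ _ _ _ T hT φ hφ
    exact hW.1 (isZero_of_len_zero len hlen (by omega))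
  | succ n IH =>
    intro W hlW hW hWY hMW hMinv hlenM T hT φ hφ
    by_cases h1 : len W ≤ 1
    · have hTz : IsZero T := pieces_isZero len hlen hT h1
      exact hW.1 (isZero_of_mono_isZero len hlen φ hTz)
    · obtain ⟨w', hw'ne, hw'ind, hw'mu⟩ := gr_submodule len hlen mu hmu hW (by omega)
      obtain ⟨T', m, ψ, hm, hfac, hp⟩ :=
        shrink len hlen mu hmu M hM hW hMW hMinv hlenM hw'ne hw'ind hw'mu hT φ
      obtain ⟨gY, hgYm, hgYni⟩ := hWY
      haveI := hgYm
      have hW'Y := mono_noniso_comp w'.arrow gY hgYni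
      have hlt : len ((w' : Subobject W) : C) < len W := len_lt_of_ne_top len hlen w' hw'ne
      haveI : Mono (ψ ≫ m) := by
        rw [hfac]
        haveI : Mono (w'.arrow ≫ φ) := mono_comp _ _
        infer_instance
      haveI hψ : Mono ψ := mono_of_mono ψ m
      refine IH ((w' : Subobject W) : C) (by omega) hw'ind ⟨_, hW'Y.1, hW'Y.2⟩ ?_ ?_ ?_ hp ψ hψ
      · rw [hw'mu]
        exact fun a ha => hMW (Finset.mem_of_mem_erase ha)
      · intro a haM hale
        rw [hw'mu]
        exact Finset.mem_erase.2 ⟨by omega, hMinv a haM (by omega)⟩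
      · have hmem := len_mem_mu len hlen mu hmu hw'ind
        rw [hw'mu] at hmem
        exact hMW (Finset.mem_of_mem_erase hmem)

end Core

end GR

/-- If `X ⊂ Y` is a Gabriel-Roiter inclusion between indecomposables and
`X ⊆ U ⊂ Y` with `U` a proper subobject of `Y`, then `X` is a direct
summand of `U`. -/
theorem grInclusion_summand
    (len : C → ℕ) (hlen : ∀ Z : C, ObjLength Z (len Z))
    (mu : C → Finset ℕ) (hmu : IsGRMeasure len mu)
    (X Y U : C) (hpred : IsGRPred mu X Y)
    (f : X ⟶ U) (hf : Mono f)
    (g : U ⟶ Y) (hg : Mono g) (hgni : ¬ IsIso g) :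
    ∃ Z : C, Nonempty (U ≅ X ⊞ Z) := by
  classical
  obtain ⟨hX, hYind, ⟨f₀, hf₀m, hf₀ni⟩, hmax⟩ := hpred
  haveI := hf₀m
  haveI := hf
  haveI := hg
  -- global bound: every proper indecomposable subobject of Y has measure at most mu X
  have hM : ∀ P : C, Indecomposable P → (∃ m : P ⟶ Y, Mono m ∧ ¬ IsIso m) →
      lexLE (mu P) (mu X) := by
    rintro P hP ⟨p, hpm, hpni⟩
    haveI := hpm
    have ht : Subobject.mk p ≠ ⊤ := fun h => hpni ((Subobject.isIso_iff_mk_eq_top p).2 h)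
    have hti : Indecomposable ((Subobject.mk p : Subobject Y) : C) :=
      GR.indec_of_iso (Subobject.underlyingIso p).symm hP
    have h1 := hmax _ ht hti
    rwa [GR.mu_iso len hlen mu hmu (Subobject.underlyingIso p) hti] at h1
  -- main induction on the length of U
  have main : ∀ (n : ℕ) (U' : C) (g' : U' ⟶ Y), Mono g' → ¬ IsIso g' →
      ∀ (f' : X ⟶ U'), Mono f' → len U' ≤ n → ∃ r : U' ⟶ X, f' ≫ r = 𝟙 X := by
    intro n
    induction n with
    | zero =>
      intro U' g' hgm hgni f' hfm hl
      haveI := hfm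
      exact absurd (GR.isZero_of_mono_isZero len hlen f'
        (GR.isZero_of_len_zero len hlen (by omega))) hX.1
    | succ n IH =>
      intro U' g' hgm hgni f' hfm hl
      haveI := hgm
      haveI := hfm
      by_cases hfi : IsIso f'
      · exact ⟨inv f', by simp⟩
      by_cases hUz : IsZero U'
      · exact absurd (GR.isZero_of_mono_isZero len hlen f' hUz) hX.1
      by_cases hUind : Indecomposable U'
      · exfalso
        have h1 := GR.mu_insert_le len hlen mu hmu f' hX hUind
        have h2 := hM U' hUind ⟨g', hgm, hgni⟩
        have h3 := GR.lexLE_trans h1 h2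
        have h4 := GR.eq_of_lexLE_of_subset h3 (Finset.subset_insert _ _)
        have h5 : len U' ∈ mu X := h4 ▸ Finset.mem_insert_self _ _
        have h6 := GR.mu_elts_le len hlen mu hmu hX h5
        have h7 := GR.len_le_of_mono len hlen f'
        exact hfi (GR.isIso_of_mono_of_len_eq len hlen f' (by omega))
      obtain ⟨V, Wp, ⟨e⟩, hV, hW⟩ := GR.decompose_of_not_indec hUind hUz
      haveI : Mono ((biprod.inl : V ⟶ V ⊞ Wp) ≫ e.inv) := mono_comp _ _
      haveI : Mono ((biprod.inr : Wp ⟶ V ⊞ Wp) ≫ e.inv) := mono_comp _ _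
      have hVlt : len V < len U' := by
        have h1 : len V ≤ len U' := GR.len_le_of_mono len hlen
          ((biprod.inl : V ⟶ V ⊞ Wp) ≫ e.inv)
        rcases lt_or_eq_of_le h1 with h | h
        · exact h
        · exact absurd (GR.isZero_right_of_isIso_inl_comp e
            (GR.isIso_of_mono_of_len_eq len hlen _ h)) hW
      have hWlt : len Wp < len U' := by
        have h1 : len Wp ≤ len U' := GR.len_le_of_mono len hlen
          ((biprod.inr : Wp ⟶ V ⊞ Wp) ≫ e.inv)
        rcases lt_or_eq_of_le h1 with h | h
        · exact h
        · exact absurd (GR.isZero_left_of_isIso_inr_comp e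
            (GR.isIso_of_mono_of_len_eq len hlen _ h)) hV
      have hVY := GR.mono_noniso_comp ((biprod.inl : V ⟶ V ⊞ Wp) ≫ e.inv) g' hgni
      have hWY := GR.mono_noniso_comp ((biprod.inr : Wp ⟶ V ⊞ Wp) ≫ e.inv) g' hgni
      by_cases hb : Mono (f' ≫ e.hom ≫ biprod.snd)
      · obtain ⟨r', hr'⟩ := IH Wp _ hWY.1 hWY.2 _ hb (by omega)
        exact ⟨e.hom ≫ biprod.snd ≫ r', by simpa only [Category.assoc] using hr'⟩
      by_cases ha : Mono (f' ≫ e.hom ≫ biprod.fst)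
      · obtain ⟨r', hr'⟩ := IH V _ hVY.1 hVY.2 _ ha (by omega)
        exact ⟨e.hom ≫ biprod.fst ≫ r', by simpa only [Category.assoc] using hr'⟩
      · exfalso
        have hani : ¬ Mono (Abelian.factorThruImage (f' ≫ e.hom ≫ biprod.fst)) := by
          intro hc
          apply ha
          rw [← Abelian.image.fac (f' ≫ e.hom ≫ biprod.fst)]
          exact mono_comp _ _
        have hbni : ¬ Mono (Abelian.factorThruImage (f' ≫ e.hom ≫ biprod.snd)) := by
          intro hc
          apply hb
          rw [← Abelian.image.fac (f' ≫ e.hom ≫ biprod.snd)]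
          exact mono_comp _ _
        have hlenDa : len (Abelian.image (f' ≫ e.hom ≫ biprod.fst)) < len X :=
          GR.len_lt_of_epi_not_mono len hlen _ hani
        have hlenDb : len (Abelian.image (f' ≫ e.hom ≫ biprod.snd)) < len X :=
          GR.len_lt_of_epi_not_mono len hlen _ hbni
        haveI := hVY.1
        haveI := hWY.1
        have hDaY := GR.mono_noniso_comp (Abelian.image.ι (f' ≫ e.hom ≫ biprod.fst))
          (((biprod.inl : V ⟶ V ⊞ Wp) ≫ e.inv) ≫ g') hVY.2
        have hDbY := GR.mono_noniso_comp (Abelian.image.ι (f' ≫ e.hom ≫ biprod.snd))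
          (((biprod.inr : Wp ⟶ V ⊞ Wp) ≫ e.inv) ≫ g') hWY.2
        have hpA : GR.Pieces len Y (len X) (Abelian.image (f' ≫ e.hom ≫ biprod.fst)) :=
          GR.piecesOfSmall len hlen _ _ le_rfl ⟨_, hDaY.1, hDaY.2⟩ hlenDa
        have hpB : GR.Pieces len Y (len X) (Abelian.image (f' ≫ e.hom ≫ biprod.snd)) :=
          GR.piecesOfSmall len hlen _ _ le_rfl ⟨_, hDbY.1, hDbY.2⟩ hlenDb
        have hT : GR.Pieces len Y (len X)
            (Abelian.image (f' ≫ e.hom ≫ biprod.fst) ⊞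
              Abelian.image (f' ≫ e.hom ≫ biprod.snd)) :=
          GR.Pieces.node hpA hpB (Iso.refl _)
        have hlift : biprod.lift (Abelian.factorThruImage (f' ≫ e.hom ≫ biprod.fst))
              (Abelian.factorThruImage (f' ≫ e.hom ≫ biprod.snd)) ≫
            biprod.map (Abelian.image.ι (f' ≫ e.hom ≫ biprod.fst))
              (Abelian.image.ι (f' ≫ e.hom ≫ biprod.snd)) = f' ≫ e.hom := by
          apply biprod.hom_ext
          · rw [Category.assoc, biprod.map_fst, ← Category.assoc, biprod.lift_fst,
              Abelian.image.fac, Category.assoc]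
          · rw [Category.assoc, biprod.map_snd, ← Category.assoc, biprod.lift_snd,
              Abelian.image.fac, Category.assoc]
        haveI hmm1 : Mono (biprod.map (Abelian.image.ι (f' ≫ e.hom ≫ biprod.fst))
            (Abelian.image.ι (f' ≫ e.hom ≫ biprod.snd))) :=
          GR.mono_biprod_map _ _
        haveI hmm2 : Mono (biprod.lift (Abelian.factorThruImage (f' ≫ e.hom ≫ biprod.fst))
              (Abelian.factorThruImage (f' ≫ e.hom ≫ biprod.snd)) ≫
            biprod.map (Abelian.image.ι (f' ≫ e.hom ≫ biprod.fst))
              (Abelian.image.ι (f' ≫ e.hom ≫ biprod.snd))) := by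
          rw [hlift]
          exact mono_comp _ _
        haveI hmono : Mono (biprod.lift (Abelian.factorThruImage (f' ≫ e.hom ≫ biprod.fst))
            (Abelian.factorThruImage (f' ≫ e.hom ≫ biprod.snd))) :=
          mono_of_mono _ (biprod.map (Abelian.image.ι (f' ≫ e.hom ≫ biprod.fst))
            (Abelian.image.ι (f' ≫ e.hom ≫ biprod.snd)))
        exact GR.rtree len hlen mu hmu (mu X) hM (len X) X le_rfl hX ⟨f₀, hf₀m, hf₀ni⟩
          (Finset.Subset.refl _) (fun a ha' _ => ha') (GR.len_mem_mu len hlen mu hmu hX)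
          hT _ hmono
  obtain ⟨r, hr⟩ := main (len U) U g hg hgni f hf le_rfl
  exact ⟨kernel r, ⟨GR.splitIso f r hr⟩⟩
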